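/- Let 𝓛 be a summable symmetric monoidal closed category satisfying (S-⊸). If f₀, f₁ ∈ 𝓛(Z⊗X, Y) are summable, then their curryings cur(f₀), cur(f₁) ∈ 𝓛(Z, X⊸Y) are summable and cur(f₀ + f₁) = cur(f₀) + cur(f₁). -/

import Mathlib

open CategoryTheory Limits MonoidalCategory

universe v u

/-- A pre-summability structure on a category with zero morphisms: a functor `S`
together with jointly monic natural transformations `π₀, π₁ : S ⟶ 𝟭 C` and a
natural transformation `σ : S ⟶ 𝟭 C`. -/
structure PreSummability (C : Type u) [Category.{v} C] [HasZeroMorphisms C] where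
  S : C ⥤ C
  π0 : S ⟶ 𝟭 C
  π1 : S ⟶ 𝟭 C
  σ : S ⟶ 𝟭 C
  jointly_monic : ∀ {Y X : C} (f g : Y ⟶ S.obj X),
    f ≫ π0.app X = g ≫ π0.app X → f ≫ π1.app X = g ≫ π1.app X → f = g

namespace PreSummability

variable {C : Type u} [Category.{v} C] [HasZeroMorphisms C] (P : PreSummability C)

/-- Two morphisms are summable when they admit a (necessarily unique) witness. -/
def Summable {Y X : C} (f₀ f₁ : Y ⟶ X) : Prop :=
  ∃ h : Y ⟶ P.S.obj X, h ≫ P.π0.app X = f₀ ∧ h ≫ P.π1.app X = f₁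

/-- The witness `⟨f₀, f₁⟩` of a summable pair (an arbitrary value if the pair is
not summable). -/
noncomputable def witness {Y X : C} (f₀ f₁ : Y ⟶ X) : Y ⟶ P.S.obj X :=
  @dite _ (P.Summable f₀ f₁) (Classical.propDecidable _) (fun h => h.choose) (fun _ => 0)

/-- The sum `f₀ + f₁ = σ ∘ ⟨f₀, f₁⟩` of a summable pair. -/
noncomputable def sum {Y X : C} (f₀ f₁ : Y ⟶ X) : Y ⟶ X :=
  P.witness f₀ f₁ ≫ P.σ.app X

/-- Projections indexed by a boolean. -/
def pr (i : Bool) : P.S ⟶ 𝟭 C := if i then P.π1 else P.π0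

/-- Axiom (S-com): `π₁` and `π₀` are summable with `π₁ + π₀ = σ`. -/
def SCom : Prop := ∀ X : C,
  P.Summable (P.π1.app X) (P.π0.app X) ∧ P.sum (P.π1.app X) (P.π0.app X) = P.σ.app X

/-- Axiom (S-zero): `0` and `id` are summable with `0 + id = id`. -/
def SZero : Prop := ∀ X : C,
  P.Summable (0 : X ⟶ X) (𝟙 X) ∧ P.sum (0 : X ⟶ X) (𝟙 X) = 𝟙 X

/-- Axiom (S-wit): if `σ∘f₀` and `σ∘f₁` are summable then `f₀` and `f₁` are summable. -/
def SWit : Prop := ∀ (X Y : C) (f₀ f₁ : X ⟶ P.S.obj Y),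
  P.Summable (f₀ ≫ P.σ.app Y) (f₁ ≫ P.σ.app Y) → P.Summable f₀ f₁

end PreSummability

section Monoidal

variable {C : Type u} [Category.{v} C] [HasZeroMorphisms C] [MonoidalCategory C]

/-- The tensor product of zero morphisms is zero. -/
def TensorZero (C : Type u) [Category.{v} C] [HasZeroMorphisms C]
    [MonoidalCategory C] : Prop :=
  ∀ {X Y U V : C} (f : U ⟶ V),
    ((0 : X ⟶ Y) ⊗ₘ f) = 0 ∧ (f ⊗ₘ (0 : X ⟶ Y)) = 0

/-- Axiom (S-⊗): if `f₀` and `f₁` are summable then so are `f₀ ⊗ g` and `f₁ ⊗ g`,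
with `(f₀ + f₁) ⊗ g = f₀ ⊗ g + f₁ ⊗ g`. -/
def PreSummability.STens (P : PreSummability C) : Prop :=
  ∀ {X Y U V : C} (f₀ f₁ : X ⟶ Y) (g : U ⟶ V), P.Summable f₀ f₁ →
    P.Summable (f₀ ⊗ₘ g) (f₁ ⊗ₘ g) ∧ (P.sum f₀ f₁ ⊗ₘ g) = P.sum (f₀ ⊗ₘ g) (f₁ ⊗ₘ g)

end Monoidal

namespace PreSummability

variable {C : Type u} [Category.{v} C] [HasZeroMorphisms C] [MonoidalCategory C]

/-- The canonical strength `φ¹ = ⟨π₀ ⊗ id, π₁ ⊗ id⟩ : S X ⊗ Y ⟶ S (X ⊗ Y)`. -/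
noncomputable def strength (P : PreSummability C) (X Y : C) :
    P.S.obj X ⊗ Y ⟶ P.S.obj (X ⊗ Y) :=
  P.witness (P.π0.app X ⊗ₘ 𝟙 Y) (P.π1.app X ⊗ₘ 𝟙 Y)

variable [SymmetricCategory C] [MonoidalClosed C]

/-- Currying on the right tensor factor: from `Z ⊗ X ⟶ Y` to `Z ⟶ (X ⊸ Y)`. -/
noncomputable def curR {Z X Y : C} (f : Z ⊗ X ⟶ Y) : Z ⟶ (ihom X).obj Y :=
  MonoidalClosed.curry ((β_ X Z).hom ≫ f)

/-- The canonical morphism `S(X ⊸ Y) ⟶ (X ⊸ S Y)`, obtained by currying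
`S(ev) ∘ φ¹`. -/
noncomputable def sint (P : PreSummability C) (A B : C) :
    P.S.obj ((ihom A).obj B) ⟶ (ihom A).obj (P.S.obj B) :=
  MonoidalClosed.curry
    ((β_ A (P.S.obj ((ihom A).obj B))).hom ≫ strength P ((ihom A).obj B) A ≫
      P.S.map ((β_ ((ihom A).obj B) A).hom ≫ MonoidalClosed.uncurry (𝟙 ((ihom A).obj B))))

/-- Axiom (S-⊸): the canonical morphism `S(X ⊸ Y) ⟶ (X ⊸ S Y)` is an iso. -/
def SLimpl (P : PreSummability C) : Prop := ∀ A B : C, IsIso (P.sint A B)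

end PreSummability

open PreSummability

section Helpers

variable {C : Type u} [Category.{v} C] [HasZeroMorphisms C] (P : PreSummability C)

theorem witness_spec {Y X : C} {f₀ f₁ : Y ⟶ X} (h : P.Summable f₀ f₁) :
    P.witness f₀ f₁ ≫ P.π0.app X = f₀ ∧ P.witness f₀ f₁ ≫ P.π1.app X = f₁ := by
  unfold PreSummability.witness
  rw [dif_pos h]
  exact h.choose_spec

theorem witness_unique {Y X : C} {f₀ f₁ : Y ⟶ X} (w : Y ⟶ P.S.obj X)
    (h0 : w ≫ P.π0.app X = f₀) (h1 : w ≫ P.π1.app X = f₁) :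
    P.witness f₀ f₁ = w := by
  have hs : P.Summable f₀ f₁ := ⟨w, h0, h1⟩
  obtain ⟨s0, s1⟩ := witness_spec P hs
  exact P.jointly_monic _ _ (by rw [s0, h0]) (by rw [s1, h1])

theorem summable_pi (X : C) : P.Summable (P.π0.app X) (P.π1.app X) :=
  ⟨𝟙 _, by simp, by simp⟩

theorem witness_pi (X : C) : P.witness (P.π0.app X) (P.π1.app X) = 𝟙 _ :=
  witness_unique P _ (by simp) (by simp)

theorem sum_pi (X : C) : P.sum (P.π0.app X) (P.π1.app X) = P.σ.app X := by
  rw [PreSummability.sum, witness_pi, Category.id_comp]; rfl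

variable [MonoidalCategory C]

theorem strength_pi0 (htens : P.STens) (X Y : C) :
    P.strength X Y ≫ P.π0.app (X ⊗ Y) = P.π0.app X ⊗ₘ 𝟙 Y :=
  (witness_spec P (htens _ _ _ (summable_pi P X)).1).1

theorem strength_pi1 (htens : P.STens) (X Y : C) :
    P.strength X Y ≫ P.π1.app (X ⊗ Y) = P.π1.app X ⊗ₘ 𝟙 Y :=
  (witness_spec P (htens _ _ _ (summable_pi P X)).1).2

theorem strength_sigma (htens : P.STens) (X Y : C) :
    P.strength X Y ≫ P.σ.app (X ⊗ Y) = P.σ.app X ⊗ₘ 𝟙 Y := by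
  have h := (htens _ _ (𝟙 Y) (summable_pi P X)).2
  rw [sum_pi] at h
  rw [h]
  rfl

variable [SymmetricCategory C] [MonoidalClosed C]

theorem curR_natural_right {Z X Y Y' : C} (f : Z ⊗ X ⟶ Y) (g : Y ⟶ Y') :
    curR (f ≫ g) = curR (C := C) f ≫ (ihom X).map g := by
  rw [curR, curR, ← MonoidalClosed.curry_natural_right, Category.assoc]

/-- If `τ : S ⟶ 𝟭 C` commutes with the strength as `π₀, π₁, σ` do, then
`sint` intertwines `(ihom A).map (τ.app B)` and `τ.app (A ⊸ B)`. -/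
theorem sint_comp_map (τ : P.S ⟶ 𝟭 C) (A B : C)
    (hstr : P.strength ((ihom A).obj B) A ≫ τ.app (((ihom A).obj B) ⊗ A)
      = τ.app ((ihom A).obj B) ⊗ₘ 𝟙 A) :
    P.sint A B ≫ (ihom A).map (τ.app B) = τ.app ((ihom A).obj B) := by
  have key : (β_ A (P.S.obj ((ihom A).obj B))).hom ≫ P.strength ((ihom A).obj B) A ≫
      P.S.map ((β_ ((ihom A).obj B) A).hom ≫ MonoidalClosed.uncurry (𝟙 ((ihom A).obj B))) ≫
      τ.app B = MonoidalClosed.uncurry (τ.app ((ihom A).obj B)) := by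
    rw [τ.naturality, Functor.id_map, reassoc_of% hstr,
      reassoc_of% (BraidedCategory.braiding_naturality (𝟙 A) (τ.app ((ihom A).obj B))).symm,
      SymmetricCategory.symmetry_assoc, MonoidalCategory.id_tensorHom,
      ← MonoidalClosed.uncurry_natural_left, Category.comp_id]
  rw [PreSummability.sint, ← MonoidalClosed.curry_natural_right, Category.assoc,
    Category.assoc, key, MonoidalClosed.curry_uncurry]

end Helpers

theorem stmt18 {C : Type u} [Category.{v} C] [HasZeroMorphisms C]
    [MonoidalCategory C] [SymmetricCategory C] [MonoidalClosed C]
    (htz : TensorZero C)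
    (P : PreSummability C) (hcom : P.SCom) (hzero : P.SZero) (hwit : P.SWit)
    (htens : P.STens) (hlimpl : P.SLimpl)
    {Z X Y : C} (f₀ f₁ : Z ⊗ X ⟶ Y) (hs : P.Summable f₀ f₁) :
    P.Summable (curR (C := C) f₀) (curR (C := C) f₁) ∧
    curR (C := C) (P.sum f₀ f₁) = P.sum (curR (C := C) f₀) (curR (C := C) f₁) := by
  haveI : IsIso (P.sint X Y) := hlimpl X Y
  obtain ⟨h0, h1⟩ := witness_spec P hs
  have hpi0 := sint_comp_map P P.π0 X Y (strength_pi0 P htens _ _)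
  have hpi1 := sint_comp_map P P.π1 X Y (strength_pi1 P htens _ _)
  have hsig := sint_comp_map P P.σ X Y (strength_sigma P htens _ _)
  set w : Z ⟶ P.S.obj ((ihom X).obj Y) :=
    curR (C := C) (P.witness f₀ f₁) ≫ inv (P.sint X Y) with hw
  have e0 : inv (P.sint X Y) ≫ P.π0.app ((ihom X).obj Y) = (ihom X).map (P.π0.app Y) := by
    rw [IsIso.inv_comp_eq, hpi0]
  have e1 : inv (P.sint X Y) ≫ P.π1.app ((ihom X).obj Y) = (ihom X).map (P.π1.app Y) := by
    rw [IsIso.inv_comp_eq, hpi1]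
  have eσ : inv (P.sint X Y) ≫ P.σ.app ((ihom X).obj Y) = (ihom X).map (P.σ.app Y) := by
    rw [IsIso.inv_comp_eq, hsig]
  have w0 : w ≫ P.π0.app _ = curR (C := C) f₀ := by
    rw [hw, Category.assoc, e0, ← curR_natural_right, h0]
  have w1 : w ≫ P.π1.app _ = curR (C := C) f₁ := by
    rw [hw, Category.assoc, e1, ← curR_natural_right, h1]
  refine ⟨⟨w, w0, w1⟩, ?_⟩
  rw [show P.sum (curR (C := C) f₀) (curR (C := C) f₁)
      = P.witness (curR (C := C) f₀) (curR (C := C) f₁) ≫ P.σ.app _ from rfl,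
    witness_unique P w w0 w1, hw, Category.assoc, eσ, ← curR_natural_right]
  rfl
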